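/- Let ⋆ be a finite type a.b. semistar operation on an integral domain D, let P be a prime ideal of D, and let 𝒱_P be the set of ⋆-valuation overrings of D that contain D_P. Then 𝒱_P is exactly the set of ⋆_P-valuation overrings of D_P, where ⋆_P is the semistar operation on D_P induced by ⋆. -/

import Mathlib

open Pointwise

section Preamble

variable (D : Type*) [CommRing D] [IsDomain D]
variable (K : Type*) [Field K] [Algebra D K] [IsFractionRing D K]

/-- The localization `D_P` of `D` at a prime `P`, as a subalgebra of the quotient field. -/
noncomputable def locAt (P : Ideal D) (hP : P.IsPrime) : Subalgebra D K :=
  Localization.subalgebra K P.primeCompl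
    (fun x hx => mem_nonZeroDivisors_of_ne_zero (fun h0 : x = 0 => hx (h0 ▸ P.zero_mem)))

/-- `D_P` as a `D`-submodule of the quotient field. -/
noncomputable def locAtM (P : Ideal D) (hP : P.IsPrime) : Submodule D K :=
  Subalgebra.toSubmodule (locAt D K P hP)

variable {D K}

/-- `E` is finitely generated as a module over the subring corresponding to `Rm`. -/
def IsRFG (Rm E : Submodule D K) : Prop :=
  ∃ F₀ : Submodule D K, F₀.FG ∧ F₀ ≠ ⊥ ∧ E = F₀ * Rm

/-- `s` is a semistar operation on the subring corresponding to `Rm`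
(on `D` itself when `Rm = 1`): it is defined on the nonzero `Rm`-submodules of `K`. -/
def IsSemistar (Rm : Submodule D K) (s : Submodule D K → Submodule D K) : Prop :=
  (∀ E, E ≠ ⊥ → Rm * E ≤ E → Rm * s E ≤ s E) ∧
  (∀ (x : K) (E), x ≠ 0 → E ≠ ⊥ → Rm * E ≤ E → s (x • E) = x • s E) ∧
  (∀ E F, E ≠ ⊥ → F ≠ ⊥ → Rm * E ≤ E → Rm * F ≤ F → E ≤ F → s E ≤ s F) ∧
  (∀ E, E ≠ ⊥ → Rm * E ≤ E → E ≤ s E) ∧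
  (∀ E, E ≠ ⊥ → Rm * E ≤ E → s (s E) = s E)

/-- `s` is of finite type. -/
def IsFiniteType (Rm : Submodule D K) (s : Submodule D K → Submodule D K) : Prop :=
  ∀ E, E ≠ ⊥ → Rm * E ≤ E → s E = sSup {G | ∃ F, IsRFG Rm F ∧ F ≤ E ∧ G = s F}

/-- `s` is a.b. -/
def IsAB (Rm : Submodule D K) (s : Submodule D K → Submodule D K) : Prop :=
  ∀ F G H : Submodule D K, IsRFG Rm F → G ≠ ⊥ → Rm * G ≤ G → H ≠ ⊥ → Rm * H ≤ H →
    s (F * G) ≤ s (F * H) → s G ≤ s H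

/-- `s` is e.a.b. -/
def IsEAB (Rm : Submodule D K) (s : Submodule D K → Submodule D K) : Prop :=
  ∀ F G H : Submodule D K, IsRFG Rm F → IsRFG Rm G → IsRFG Rm H →
    s (F * G) ≤ s (F * H) → s G ≤ s H

/-- `s` is stable. -/
def IsStable (Rm : Submodule D K) (s : Submodule D K → Submodule D K) : Prop :=
  ∀ E F, E ≠ ⊥ → F ≠ ⊥ → Rm * E ≤ E → Rm * F ≤ F → s (E ⊓ F) = s E ⊓ s F

/-- The divisorial closure `E ↦ (R : (R : E))` over the subring corresponding to `Rm`. -/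
def vOp (Rm E : Submodule D K) : Submodule D K := Rm / (Rm / E)

/-- The `t`-operation over the subring corresponding to `Rm`. -/
def tOp (Rm E : Submodule D K) : Submodule D K :=
  sSup {G | ∃ F, IsRFG Rm F ∧ F ≤ E ∧ G = vOp Rm F}

end Preamble

variable {D : Type*} [CommRing D] [IsDomain D]
variable {K : Type*} [Field K] [Algebra D K] [IsFractionRing D K]

/-- for a finite type a.b. semistar operation `⋆` on `D`, the
`⋆`-valuation overrings of `D` containing `D_P` are exactly the `⋆_P`-valuation
overrings of `D_P`. -/
theorem stmt6 (P : Ideal D) (hP : P.IsPrime) (s : Submodule D K → Submodule D K)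
    (hs : IsSemistar (1 : Submodule D K) s) (hft : IsFiniteType (1 : Submodule D K) s)
    (hab : IsAB (1 : Submodule D K) s) :
    {V : Subalgebra D K | ValuationRing V ∧
        (∀ F : Submodule D K, F.FG → F ≠ ⊥ → s F ≤ F * Subalgebra.toSubmodule V) ∧
        locAt D K P hP ≤ V} =
      {V : Subalgebra D K | locAt D K P hP ≤ V ∧ ValuationRing V ∧
        (∀ G : Submodule D K, IsRFG (locAtM D K P hP) G → s G ≤ G * Subalgebra.toSubmodule V)} := by
  ext V
  simp only [Set.mem_setOf_eq]
  have hVV : Subalgebra.toSubmodule V * Subalgebra.toSubmodule V ≤ Subalgebra.toSubmodule V :=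
    Submodule.mul_le.2 fun x hx y hy => V.mul_mem hx hy
  have h1P : (1 : Submodule D K) ≤ locAtM D K P hP :=
    Submodule.one_le.2 (locAt D K P hP).one_mem
  constructor
  · rintro ⟨hval, hstar, hle⟩
    refine ⟨hle, hval, ?_⟩
    rintro G ⟨F₀, hFG, hF₀, rfl⟩
    have hsub : F₀ ≤ F₀ * locAtM D K P hP := by
      calc F₀ = F₀ * 1 := (mul_one _).symm
        _ ≤ F₀ * locAtM D K P hP := mul_le_mul' le_rfl h1P
    have hGne : F₀ * locAtM D K P hP ≠ ⊥ := fun h => hF₀ (le_bot_iff.1 (h ▸ hsub))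
    rw [hft _ hGne (by rw [one_mul])]
    apply sSup_le
    rintro g ⟨F, ⟨F', hF'FG, hF'ne, rfl⟩, hFle2, rfl⟩
    rw [mul_one] at hFle2 ⊢
    calc s F' ≤ F' * Subalgebra.toSubmodule V := hstar F' hF'FG hF'ne
      _ ≤ (F₀ * locAtM D K P hP) * Subalgebra.toSubmodule V :=
          mul_le_mul' hFle2 le_rfl
  · rintro ⟨hle, hval, hstar⟩
    refine ⟨hval, ?_, hle⟩
    intro F hFG hF
    have hsub : F ≤ F * locAtM D K P hP := by
      calc F = F * 1 := (mul_one _).symm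
        _ ≤ F * locAtM D K P hP := mul_le_mul' le_rfl h1P
    have hGne : F * locAtM D K P hP ≠ ⊥ := fun h => hF (le_bot_iff.1 (h ▸ hsub))
    have hPle : locAtM D K P hP ≤ Subalgebra.toSubmodule V :=
      Subalgebra.toSubmodule.monotone hle
    calc s F ≤ s (F * locAtM D K P hP) :=
          hs.2.2.1 F _ hF hGne (by rw [one_mul]) (by rw [one_mul]) hsub
      _ ≤ (F * locAtM D K P hP) * Subalgebra.toSubmodule V :=
          hstar _ ⟨F, hFG, hF, rfl⟩
      _ = F * (locAtM D K P hP * Subalgebra.toSubmodule V) := mul_assoc _ _ _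
      _ ≤ F * (Subalgebra.toSubmodule V * Subalgebra.toSubmodule V) :=
          mul_le_mul' le_rfl (mul_le_mul' hPle le_rfl)
      _ ≤ F * Subalgebra.toSubmodule V := mul_le_mul' le_rfl hVV
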